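/- Let Ψ(v₁,…,vₙ) = ∏_{k ∈ K} φ_k(v_{S_k}) be a product of complex factors, each depending only on a subset S_k of the variables, and suppose the system is bipartitioned into regions A and A^c such that every S_k intersecting both A and A^c satisfies |S_k| ≤ c for a constant c, and the number of such 'crossing' factors is at most L. Then the Schmidt rank of |Ψ⟩ = ∑_v Ψ(v)|v⟩ across the bipartition (A, A^c) is at most 2^{cL}, and hence the Rényi entanglement entropies satisfy S^α(A) ≤ cL·log 2 for all α. -/

import Mathlib

open Matrix

lemma my_trace_eq_sum_eigenvalues {m : Type*} [Fintype m] [DecidableEq m]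
    {A : Matrix m m ℂ} (hA : A.IsHermitian) :
    A.trace = ∑ i, (hA.eigenvalues i : ℂ) := by
  exact hA.trace_eq_sum_eigenvalues

lemma my_jensen_ge {ι : Type*} (T : Finset ι) (f : ι → ℝ) (hf : ∀ i ∈ T, 0 ≤ f i)
    (hsum : ∑ i ∈ T, f i = 1) {α : ℝ} (hα : 1 ≤ α) :
    (T.card : ℝ) ^ (1 - α) ≤ ∑ i ∈ T, f i ^ α := by
  have hTne : T.Nonempty := by
    rcases T.eq_empty_or_nonempty with h | h
    · simp [h] at hsum
    · exact h
  have ht : (0:ℝ) < T.card := by exact_mod_cast hTne.card_pos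
  have hw : ∑ _i ∈ T, ((T.card : ℝ))⁻¹ = 1 := by
    rw [Finset.sum_const, nsmul_eq_mul, mul_inv_cancel₀ ht.ne']
  have key := Real.rpow_arith_mean_le_arith_mean_rpow T (fun _ => ((T.card:ℝ))⁻¹) f
    (fun i _ => by positivity) hw hf hα
  have hL : (∑ i ∈ T, ((T.card:ℝ))⁻¹ * f i) = (T.card:ℝ)⁻¹ := by
    rw [← Finset.mul_sum, hsum, mul_one]
  have hR : (∑ i ∈ T, ((T.card:ℝ))⁻¹ * f i ^ α) = (T.card:ℝ)⁻¹ * ∑ i ∈ T, f i ^ α := by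
    rw [Finset.mul_sum]
  rw [hL, hR] at key
  have : ((T.card:ℝ)⁻¹) ^ α = (T.card:ℝ) ^ (-α) := by
    rw [Real.inv_rpow ht.le, ← Real.rpow_neg ht.le]
  rw [this] at key
  have := mul_le_mul_of_nonneg_left key ht.le
  calc (T.card : ℝ) ^ (1 - α) = (T.card:ℝ) * (T.card:ℝ) ^ (-α) := by
        rw [sub_eq_add_neg, Real.rpow_add ht, Real.rpow_one]
      _ ≤ (T.card:ℝ) * ((T.card:ℝ)⁻¹ * ∑ i ∈ T, f i ^ α) := this
      _ = ∑ i ∈ T, f i ^ α := by field_simp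

lemma my_jensen_le {ι : Type*} (T : Finset ι) (f : ι → ℝ) (hf : ∀ i ∈ T, 0 ≤ f i)
    (hsum : ∑ i ∈ T, f i = 1) {α : ℝ} (hα0 : 0 < α) (hα : α ≤ 1) :
    ∑ i ∈ T, f i ^ α ≤ (T.card : ℝ) ^ (1 - α) := by
  have hTne : T.Nonempty := by
    rcases T.eq_empty_or_nonempty with h | h
    · simp [h] at hsum
    · exact h
  have ht : (0:ℝ) < T.card := by exact_mod_cast hTne.card_pos
  have hw : ∑ _i ∈ T, ((T.card : ℝ))⁻¹ = 1 := by
    rw [Finset.sum_const, nsmul_eq_mul, mul_inv_cancel₀ ht.ne']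
  have hp : (1:ℝ) ≤ 1 / α := by
    rw [le_div_iff₀ hα0, one_mul]; exact hα
  have key := Real.arith_mean_le_rpow_mean T (fun _ => ((T.card:ℝ))⁻¹) (fun i => f i ^ α)
    (fun i _ => by positivity) hw (fun i hi => Real.rpow_nonneg (hf i hi) α) hp
  have h1 : ∀ i ∈ T, (f i ^ α) ^ (1/α) = f i := by
    intro i hi
    rw [← Real.rpow_mul (hf i hi), mul_one_div, div_self hα0.ne', Real.rpow_one]
  have e1 : ∑ i ∈ T, (T.card:ℝ)⁻¹ * f i ^ α = (T.card:ℝ)⁻¹ * ∑ i ∈ T, f i ^ α :=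
    (Finset.mul_sum _ _ _).symm
  have e2 : (∑ i ∈ T, (T.card:ℝ)⁻¹ * (f i ^ α) ^ (1/α)) = (T.card:ℝ)⁻¹ := by
    rw [Finset.sum_congr rfl (fun i hi => by rw [h1 i hi]), ← Finset.mul_sum, hsum, mul_one]
  rw [e1, e2, one_div_one_div] at key
  have hpow : (T.card:ℝ)⁻¹ ^ α = (T.card:ℝ) ^ (-α) := by
    rw [Real.inv_rpow ht.le, ← Real.rpow_neg ht.le]
  calc ∑ i ∈ T, f i ^ α = (T.card:ℝ) * ((T.card:ℝ)⁻¹ * ∑ i ∈ T, f i ^ α) := by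
        field_simp
    _ ≤ (T.card:ℝ) * ((T.card:ℝ)⁻¹ ^ α) := by
        exact mul_le_mul_of_nonneg_left key ht.le
    _ = (T.card:ℝ) ^ (1 - α) := by
        rw [hpow, sub_eq_add_neg, Real.rpow_add ht, Real.rpow_one]

open scoped Classical in
/-- Entanglement area-law mechanism for product-form (e.g. RBM) states: if
`Ψ(v) = ∏ₖ φₖ(v)` where each factor `φₖ` depends only on the variables in `Sₖ`,
every factor crossing the bipartition `(A, Aᶜ)` involves at most `c` variables,
and there are at most `L` crossing factors, then the Schmidt rank of `Ψ` across
the bipartition (the rank of the coefficient matrix `M`) is at most `2^{cL}`,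
and—provided the state is normalized—all Rényi entanglement entropies
`S^α(A) = (1-α)⁻¹ log Tr ρ_A^α` (computed from the eigenvalues of the reduced
density matrix `ρ_A = M Mᴴ`) are bounded by `c L log 2`. -/
theorem product_state_schmidt_rank_bound (n : ℕ) (K : Type) [Fintype K]
    (S : K → Finset (Fin n)) (φ : K → (Fin n → Fin 2) → ℂ)
    (hdep : ∀ k (v w : Fin n → Fin 2), (∀ i ∈ S k, v i = w i) → φ k v = φ k w)
    (A : Finset (Fin n)) (c L : ℕ)
    (hc : ∀ k, (S k ∩ A).Nonempty → (S k ∩ Aᶜ).Nonempty → (S k).card ≤ c)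
    (hL : (Finset.univ.filter
      (fun k => (S k ∩ A).Nonempty ∧ (S k ∩ Aᶜ).Nonempty)).card ≤ L)
    (M : Matrix ({i // i ∈ A} → Fin 2) ({i // i ∉ A} → Fin 2) ℂ)
    (hM : ∀ x y, M x y = ∏ k, φ k (fun i => if h : i ∈ A then x ⟨i, h⟩ else y ⟨i, h⟩)) :
    M.rank ≤ 2 ^ (c * L) ∧
    ((M * Mᴴ).trace = 1 →
      ∀ α : ℝ, 0 < α → α ≠ 1 →
        (1 - α)⁻¹ * Real.log (∑ i,
            ((isHermitian_mul_conjTranspose_self M).eigenvalues i : ℝ) ^ α)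
          ≤ (c * L : ℝ) * Real.log 2) := by
  classical
  set Kc : Finset K :=
    Finset.univ.filter (fun k => (S k ∩ A).Nonempty ∧ (S k ∩ Aᶜ).Nonempty) with hKc
  set B : Finset (Fin n) := Kc.biUnion (fun k => S k ∩ A) with hB
  have hBA : ∀ i ∈ B, i ∈ A := by
    intro i hi
    rw [hB, Finset.mem_biUnion] at hi
    obtain ⟨k, _, hk⟩ := hi
    exact (Finset.mem_inter.mp hk).2
  have hBcard : B.card ≤ c * L := by
    calc B.card ≤ ∑ k ∈ Kc, (S k ∩ A).card := Finset.card_biUnion_le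
      _ ≤ ∑ _k ∈ Kc, c := by
          refine Finset.sum_le_sum fun k hk => ?_
          rw [hKc, Finset.mem_filter] at hk
          exact le_trans (Finset.card_le_card (Finset.inter_subset_left)) (hc k hk.2.1 hk.2.2)
      _ = Kc.card * c := by rw [Finset.sum_const, smul_eq_mul]
      _ ≤ L * c := Nat.mul_le_mul_right c hL
      _ = c * L := Nat.mul_comm L c
  -- the rank bound via a factorization M = N * P
  set KA : Finset K := Finset.univ.filter (fun k => S k ∩ Aᶜ = ∅) with hKA
  set ext : ({i // i ∈ B} → Fin 2) → ({i // i ∉ A} → Fin 2) → (Fin n → Fin 2) :=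
    fun b y i => if h : i ∈ A then (if h' : i ∈ B then b ⟨i, h'⟩ else 0) else y ⟨i, h⟩ with hext
  set liftx : ({i // i ∈ A} → Fin 2) → (Fin n → Fin 2) :=
    fun x i => if h : i ∈ A then x ⟨i, h⟩ else 0 with hliftx
  set N : Matrix ({i // i ∈ A} → Fin 2) ({i // i ∈ B} → Fin 2) ℂ :=
    fun x b => if (∀ i : {i // i ∈ B}, x ⟨i.1, hBA i.1 i.2⟩ = b i)
      then ∏ k ∈ KA, φ k (liftx x) else 0 with hN
  set P : Matrix ({i // i ∈ B} → Fin 2) ({i // i ∉ A} → Fin 2) ℂ :=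
    fun b y => ∏ k ∈ KAᶜ, φ k (ext b y) with hP
  have hMNP : M = N * P := by
    ext x y
    rw [hM, Matrix.mul_apply]
    have hb0 : ∀ b : {i // i ∈ B} → Fin 2, b ≠ (fun i => x ⟨i.1, hBA i.1 i.2⟩) →
        N x b * P b y = 0 := by
      intro b hb
      rw [hN]
      simp only
      rw [if_neg, zero_mul]
      intro hcond
      exact hb (funext fun i => (hcond i).symm)
    rw [Finset.sum_eq_single (fun i => x ⟨i.1, hBA i.1 i.2⟩)
      (fun b _ hb => hb0 b hb) (fun h => absurd (Finset.mem_univ _) h)]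
    have hNx : N x (fun i => x ⟨i.1, hBA i.1 i.2⟩) = ∏ k ∈ KA, φ k (liftx x) :=
      if_pos (fun i => rfl)
    have hPy : P (fun i => x ⟨i.1, hBA i.1 i.2⟩) y
        = ∏ k ∈ KAᶜ, φ k (ext (fun i => x ⟨i.1, hBA i.1 i.2⟩) y) := rfl
    rw [hNx, hPy,
      ← Finset.prod_mul_prod_compl KA
        (fun k => φ k (fun i => if h : i ∈ A then x ⟨i, h⟩ else y ⟨i, h⟩))]
    congr 1
    · refine Finset.prod_congr rfl fun k hk => ?_
      refine hdep k _ _ fun i hi => ?_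
      rw [hKA, Finset.mem_filter] at hk
      have hiA : i ∈ A := by
        by_contra hiA
        exact absurd (Finset.mem_inter.mpr ⟨hi, Finset.mem_compl.mpr hiA⟩)
          (by rw [hk.2]; exact Finset.notMem_empty i)
      simp [hliftx, hiA]
    · refine Finset.prod_congr rfl fun k hk => ?_
      refine hdep k _ _ fun i hi => ?_
      rw [Finset.mem_compl, hKA, Finset.mem_filter] at hk
      by_cases hiA : i ∈ A
      · have hkC : k ∈ Kc := by
          rw [hKc, Finset.mem_filter]
          refine ⟨Finset.mem_univ _, ⟨i, Finset.mem_inter.mpr ⟨hi, hiA⟩⟩, ?_⟩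
          rcases Finset.eq_empty_or_nonempty (S k ∩ Aᶜ) with h | h
          · exact absurd ⟨Finset.mem_univ k, h⟩ hk
          · exact h
        have hiB : i ∈ B := by
          rw [hB, Finset.mem_biUnion]
          exact ⟨k, hkC, Finset.mem_inter.mpr ⟨hi, hiA⟩⟩
        simp [hext, hiA, hiB]
      · simp [hext, hiA]
  have hrank : M.rank ≤ 2 ^ (c * L) := by
    rw [hMNP]
    calc (N * P).rank ≤ N.rank := Matrix.rank_mul_le_left N P
      _ ≤ Fintype.card ({i // i ∈ B} → Fin 2) := Matrix.rank_le_card_width N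
      _ = 2 ^ B.card := by simp [Fintype.card_fun, Fintype.card_coe]
      _ ≤ 2 ^ (c * L) := Nat.pow_le_pow_right (by norm_num) hBcard
  refine ⟨hrank, ?_⟩
  -- entropy bound
  intro htr α hα0 hα1
  set hH := isHermitian_mul_conjTranspose_self M with hHdef
  set lam : _ → ℝ := hH.eigenvalues with hlam
  have hnn : ∀ i, 0 ≤ lam i := fun i => Matrix.eigenvalues_self_mul_conjTranspose_nonneg M i
  have hsum : ∑ i, lam i = 1 := by
    have := my_trace_eq_sum_eigenvalues hH
    rw [htr] at this
    have h2 : ((∑ i, lam i : ℝ) : ℂ) = 1 := by push_cast [← this]; exact this.symm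
    exact_mod_cast h2
  set T : Finset _ := Finset.univ.filter (fun i => lam i ≠ 0) with hT
  have hsumT : ∑ i ∈ T, lam i = 1 := by
    rw [hT, Finset.sum_filter_ne_zero, hsum]
  have hTcard : T.card ≤ 2 ^ (c * L) := by
    have h1 : (M * Mᴴ).rank = Fintype.card {i // lam i ≠ 0} := hH.rank_eq_card_non_zero_eigs
    have h2 : (M * Mᴴ).rank = M.rank := by
      open scoped ComplexOrder in exact Matrix.rank_self_mul_conjTranspose M
    have h3 : T.card = Fintype.card {i // lam i ≠ 0} := (Fintype.card_subtype _).symm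
    omega
  have hEq : (∑ i, lam i ^ α) = ∑ i ∈ T, lam i ^ α := by
    refine (Finset.sum_subset (Finset.subset_univ T) fun i _ hi => ?_).symm
    rw [hT, Finset.mem_filter] at hi
    push_neg at hi
    rw [hi (Finset.mem_univ i), Real.zero_rpow hα0.ne']
  have hTne : T.Nonempty := by
    rcases T.eq_empty_or_nonempty with h | h
    · rw [h] at hsumT; simp at hsumT
    · exact h
  have hTpos : (0:ℝ) < T.card := by exact_mod_cast hTne.card_pos
  have hspos : 0 < ∑ i ∈ T, lam i ^ α := by
    refine Finset.sum_pos (fun i hi => ?_) hTne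
    rw [hT, Finset.mem_filter] at hi
    exact Real.rpow_pos_of_pos (lt_of_le_of_ne (hnn i) (Ne.symm hi.2)) α
  have hRpos : (0:ℝ) < (2:ℝ) ^ (c * L : ℕ) := by positivity
  have hTR : (T.card : ℝ) ≤ (2:ℝ) ^ (c * L : ℕ) := by
    exact_mod_cast (by exact_mod_cast hTcard : (T.card : ℝ) ≤ ((2 ^ (c * L) : ℕ) : ℝ))
  have hlogR : Real.log ((2:ℝ) ^ (c * L : ℕ)) = (c * L : ℝ) * Real.log 2 := by
    rw [Real.log_pow]; push_cast; ring
  rw [hEq]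
  rcases lt_or_gt_of_ne hα1 with hlt | hgt
  · -- α < 1
    have h1 : ∑ i ∈ T, lam i ^ α ≤ (T.card : ℝ) ^ (1 - α) :=
      my_jensen_le T lam (fun i _ => hnn i) hsumT hα0 hlt.le
    have h2 : (T.card : ℝ) ^ (1 - α) ≤ ((2:ℝ) ^ (c * L : ℕ)) ^ (1 - α) :=
      Real.rpow_le_rpow hTpos.le hTR (by linarith)
    have h3 : Real.log (∑ i ∈ T, lam i ^ α) ≤ (1 - α) * Real.log ((2:ℝ) ^ (c * L : ℕ)) := by
      rw [← Real.log_rpow hRpos]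
      exact Real.log_le_log hspos (h1.trans h2)
    have h4 : (0:ℝ) < (1 - α)⁻¹ := by
      rw [inv_pos]; linarith
    calc (1 - α)⁻¹ * Real.log (∑ i ∈ T, lam i ^ α)
        ≤ (1 - α)⁻¹ * ((1 - α) * Real.log ((2:ℝ) ^ (c * L : ℕ))) :=
          mul_le_mul_of_nonneg_left h3 h4.le
      _ = Real.log ((2:ℝ) ^ (c * L : ℕ)) := by
          rw [← mul_assoc, inv_mul_cancel₀ (by linarith : (1:ℝ) - α ≠ 0), one_mul]
      _ = (c * L : ℝ) * Real.log 2 := hlogR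
  · -- α > 1
    have h1 : (T.card : ℝ) ^ (1 - α) ≤ ∑ i ∈ T, lam i ^ α :=
      my_jensen_ge T lam (fun i _ => hnn i) hsumT hgt.le
    have h2 : ((2:ℝ) ^ (c * L : ℕ)) ^ (1 - α) ≤ (T.card : ℝ) ^ (1 - α) :=
      Real.rpow_le_rpow_of_nonpos hTpos hTR (by linarith)
    have h3 : (1 - α) * Real.log ((2:ℝ) ^ (c * L : ℕ)) ≤ Real.log (∑ i ∈ T, lam i ^ α) := by
      rw [← Real.log_rpow hRpos]
      exact Real.log_le_log (Real.rpow_pos_of_pos hRpos _) (h2.trans h1)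
    have h4 : (1 - α)⁻¹ < 0 := by
      rw [inv_lt_zero]; linarith
    calc (1 - α)⁻¹ * Real.log (∑ i ∈ T, lam i ^ α)
        ≤ (1 - α)⁻¹ * ((1 - α) * Real.log ((2:ℝ) ^ (c * L : ℕ))) :=
          mul_le_mul_of_nonpos_left h3 h4.le
      _ = Real.log ((2:ℝ) ^ (c * L : ℕ)) := by
          rw [← mul_assoc, inv_mul_cancel₀ (by linarith : (1:ℝ) - α ≠ 0), one_mul]
      _ = (c * L : ℝ) * Real.log 2 := hlogR
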